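/- arXiv:0809.0787 — 7 statements merged into one kernel-verified Lean document; each statement's English description precedes it below -/
import Mathlib

section
/- For every ε ∈ (0,1) and every s with 0 ≤ s < 1 (and s < 1/ε), one has ((1+εs)/(1-εs))^{1/ε} ≤ (1+s)/(1-s). -/
open Real

theorem stmt_3 (ε s : ℝ) (hε0 : 0 < ε) (hε1 : ε < 1) (hs0 : 0 ≤ s) (hs1 : s < 1) :
    ((1 + ε * s) / (1 - ε * s)) ^ (1 / ε) ≤ (1 + s) / (1 - s) := by
  have hes : ε * s ≤ s := by nlinarith
  have hes0 : 0 ≤ ε * s := by positivity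
  have h1es : 0 < 1 - ε * s := by nlinarith
  have h1es' : 0 < 1 + ε * s := by nlinarith
  have h1s : 0 < 1 - s := by linarith
  have h1s' : 0 < 1 + s := by linarith
  -- series for both logs
  have habs1 : |ε * s| < 1 := by rw [abs_of_nonneg hes0]; linarith
  have habs2 : |s| < 1 := by rw [abs_of_nonneg hs0]; linarith
  have hsum1 := (Real.hasSum_log_sub_log_of_abs_lt_one habs1).mul_left (1 / ε)
  have hsum2 := Real.hasSum_log_sub_log_of_abs_lt_one habs2
  have hkey : (1 / ε) * (Real.log (1 + ε * s) - Real.log (1 - ε * s)) ≤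
      Real.log (1 + s) - Real.log (1 - s) := by
    refine hasSum_le (fun k => ?_) hsum1 hsum2
    have hpow : (ε * s) ^ (2 * k + 1) = ε ^ (2 * k + 1) * s ^ (2 * k + 1) := mul_pow _ _ _
    have hε2k : ε ^ (2 * k) ≤ 1 := pow_le_one₀ hε0.le hε1.le
    have : (1 / ε) * ((ε * s) ^ (2 * k + 1)) ≤ s ^ (2 * k + 1) := by
      rw [hpow, pow_succ' ε (2 * k)]
      rw [one_div, ← mul_assoc, ← mul_assoc, inv_mul_cancel₀ hε0.ne', one_mul]
      calc ε ^ (2 * k) * s ^ (2 * k + 1) ≤ 1 * s ^ (2 * k + 1) := by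
              apply mul_le_mul_of_nonneg_right hε2k (by positivity)
        _ = s ^ (2 * k + 1) := one_mul _
    have hc : (0:ℝ) ≤ 2 * (1 / (2 * (k:ℝ) + 1)) := by positivity
    calc (1 / ε) * (2 * (1 / (2 * (k:ℝ) + 1)) * (ε * s) ^ (2 * k + 1))
        = 2 * (1 / (2 * (k:ℝ) + 1)) * ((1 / ε) * (ε * s) ^ (2 * k + 1)) := by ring
      _ ≤ 2 * (1 / (2 * (k:ℝ) + 1)) * s ^ (2 * k + 1) :=
          mul_le_mul_of_nonneg_left this hc
  have hlog1 : Real.log ((1 + ε * s) / (1 - ε * s)) =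
      Real.log (1 + ε * s) - Real.log (1 - ε * s) := Real.log_div h1es'.ne' h1es.ne'
  have hlog2 : Real.log ((1 + s) / (1 - s)) =
      Real.log (1 + s) - Real.log (1 - s) := Real.log_div h1s'.ne' h1s.ne'
  have hbase : 0 < (1 + ε * s) / (1 - ε * s) := by positivity
  have hbase2 : 0 < (1 + s) / (1 - s) := by positivity
  rw [← Real.exp_log hbase2, Real.rpow_def_of_pos hbase]
  apply Real.exp_le_exp.2
  rw [hlog1, hlog2]
  linarith [hkey]
end

section
/- For all ε ∈ (0,1) and 0 ≤ s ≤ t < 1/ε: ((1-εs)/(1+εs))^{1/(2ε)} · (((1+εs)/(1-εs))^{1/ε} − 1) · ((1-εt)/(1+εt))^{1/(2ε)} − e^{-s}(e^{2s}−1)e^{-t} ≤ e^{-s-t}. -/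
open Real

theorem stmt_5 (ε s t : ℝ) (hε0 : 0 < ε) (hε1 : ε < 1) (hs0 : 0 ≤ s) (hst : s ≤ t)
    (ht : t < 1 / ε) :
    ((1 - ε * s) / (1 + ε * s)) ^ (1 / (2 * ε))
        * (((1 + ε * s) / (1 - ε * s)) ^ (1 / ε) - 1)
        * ((1 - ε * t) / (1 + ε * t)) ^ (1 / (2 * ε))
      - Real.exp (-s) * (Real.exp (2 * s) - 1) * Real.exp (-t)
      ≤ Real.exp (-s - t) := by
  have ht0 : 0 ≤ t := le_trans hs0 hst
  have hεt : ε * t < 1 := by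
    have := (lt_div_iff₀ hε0).mp ht
    linarith
  have hεs' : ε * s < 1 := lt_of_le_of_lt (by nlinarith) hεt
  have hps : 0 < 1 + ε * s := by nlinarith
  have hms : 0 < 1 - ε * s := by linarith
  have hpt : 0 < 1 + ε * t := by nlinarith
  have hmt : 0 < 1 - ε * t := by linarith
  set c : ℝ := 1 / (2 * ε) with hc
  have hcε : 1 / ε = 2 * c := by rw [hc]; field_simp
  set u : ℝ := c * (Real.log (1 + ε * s) - Real.log (1 - ε * s)) with hu
  set v : ℝ := c * (Real.log (1 + ε * t) - Real.log (1 - ε * t)) with hv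
  -- monotonicity of h x = c*(log(1+εx) - log(1-εx)) - x on [0,t]
  have key : u - s ≤ v - t := by
    set h : ℝ → ℝ := fun x => c * (Real.log (1 + ε * x) - Real.log (1 - ε * x)) - x with hh
    have hmono : MonotoneOn h (Set.Icc 0 t) := by
      have hne1 : ∀ x ∈ Set.Icc (0:ℝ) t, (1 + ε * x) ≠ 0 := by
        intro x hx; have := hx.1; nlinarith [hx.2, mul_le_mul_of_nonneg_left hx.2 hε0.le]
      have hne2 : ∀ x ∈ Set.Icc (0:ℝ) t, (1 - ε * x) ≠ 0 := by
        intro x hx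
        have : ε * x ≤ ε * t := mul_le_mul_of_nonneg_left hx.2 hε0.le
        nlinarith
      have hcont : ContinuousOn h (Set.Icc 0 t) := by
        apply ContinuousOn.sub _ continuousOn_id
        apply ContinuousOn.mul continuousOn_const
        apply ContinuousOn.sub
        · exact ContinuousOn.log (by fun_prop) hne1
        · exact ContinuousOn.log (by fun_prop) hne2
      have hderiv : ∀ x ∈ Set.Ioo (0:ℝ) t,
          HasDerivAt h (c * (ε / (1 + ε * x) + ε / (1 - ε * x)) - 1) x := by
        intro x hx
        have hx1 : 0 < 1 + ε * x := by nlinarith [hx.1, hx.2]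
        have hx2 : 0 < 1 - ε * x := by nlinarith [hx.2, mul_lt_mul_of_pos_left hx.2 hε0]
        have d1 : HasDerivAt (fun x : ℝ => 1 + ε * x) ε x := by
          simpa using ((hasDerivAt_id x).const_mul ε).const_add 1
        have d2 : HasDerivAt (fun x : ℝ => 1 - ε * x) (-ε) x := by
          simpa using ((hasDerivAt_id x).const_mul ε).const_sub 1
        have l1 : HasDerivAt (fun x : ℝ => Real.log (1 + ε * x)) (ε / (1 + ε * x)) x :=
          d1.log hx1.ne'
        have l2 : HasDerivAt (fun x : ℝ => Real.log (1 - ε * x)) (-ε / (1 - ε * x)) x :=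
          d2.log hx2.ne'
        have := (((l1.sub l2).const_mul c).sub (hasDerivAt_id x))
        simpa [hh, neg_div, sub_neg_eq_add, Pi.sub_def] using this
      apply monotoneOn_of_deriv_nonneg (convex_Icc 0 t) hcont
      · intro x hx
        rw [interior_Icc] at hx
        exact (hderiv x hx).differentiableAt.differentiableWithinAt
      · intro x hx
        rw [interior_Icc] at hx
        rw [(hderiv x hx).deriv]
        have hx1 : 0 < 1 + ε * x := by nlinarith [hx.1, hx.2]
        have hx2 : 0 < 1 - ε * x := by nlinarith [hx.2, mul_lt_mul_of_pos_left hx.2 hε0]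
        have hsum : ε / (1 + ε * x) + ε / (1 - ε * x)
            = 2 * ε / ((1 + ε * x) * (1 - ε * x)) := by
          field_simp; ring
        rw [hsum, hc]
        have hP : 0 < (1 + ε * x) * (1 - ε * x) := mul_pos hx1 hx2
        have hP1 : (1 + ε * x) * (1 - ε * x) ≤ 1 := by nlinarith [hx.1, sq_nonneg (ε * x)]
        have : (1:ℝ) ≤ 1 / (2 * ε) * (2 * ε / ((1 + ε * x) * (1 - ε * x))) := by
          rw [div_mul_div_comm, one_mul]
          rw [le_div_iff₀ (by positivity)]
          nlinarith
        linarith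
    have := hmono (Set.mem_Icc.mpr ⟨hs0, hst⟩) (Set.mem_Icc.mpr ⟨ht0, le_rfl⟩) hst
    simpa [hh, hu, hv] using this
  -- rewrite rpow's as exps
  have e1 : ((1 - ε * s) / (1 + ε * s)) ^ c = Real.exp (-u) := by
    rw [Real.rpow_def_of_pos (by positivity), Real.log_div hms.ne' hps.ne']
    congr 1
    rw [hu]; ring
  have e2 : ((1 + ε * s) / (1 - ε * s)) ^ (1 / ε) = Real.exp (2 * u) := by
    rw [Real.rpow_def_of_pos (by positivity), Real.log_div hps.ne' hms.ne']
    congr 1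
    rw [hcε, hu]; ring
  have e3 : ((1 - ε * t) / (1 + ε * t)) ^ c = Real.exp (-v) := by
    rw [Real.rpow_def_of_pos (by positivity), Real.log_div hmt.ne' hpt.ne']
    congr 1
    rw [hv]; ring
  rw [e1, e2, e3]
  have expand : ∀ x y : ℝ, Real.exp (-x) * (Real.exp (2 * x) - 1) * Real.exp (-y)
      = Real.exp (x - y) - Real.exp (-x - y) := by
    intro x y
    rw [mul_sub, mul_one, sub_mul, ← Real.exp_add, ← Real.exp_add, ← Real.exp_add]
    ring_nf
  rw [expand u v, expand s t]
  have h1 : Real.exp (u - v) ≤ Real.exp (s - t) := Real.exp_le_exp.mpr (by linarith)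
  have h2 : 0 < Real.exp (-u - v) := Real.exp_pos _
  have h3 : 0 < Real.exp (-s - t) := Real.exp_pos _
  linarith
end

section
/- The eigenvalue equation −(s/2) f'' + s f' = λ f has a polynomial solution with zero constant term of degree n precisely when λ = n, for each positive integer n, and this polynomial solution is unique up to scalar multiple. -/
open Polynomial

lemma l_coeff (p : Polynomial ℝ) (k : ℕ) :
    (X * derivative p - C (2⁻¹:ℝ) * (X * derivative (derivative p))).coeff k
      = (k:ℝ) * p.coeff k - ((k:ℝ)*((k:ℝ)+1)/2) * p.coeff (k+1) := by
  cases k with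
  | zero => simp
  | succ m =>
    simp only [coeff_sub, coeff_C_mul, coeff_X_mul, coeff_derivative]
    push_cast
    ring

lemma eq_of_eval_pos {p q : Polynomial ℝ} (h : ∀ s : ℝ, 0 < s → p.eval s = q.eval s) :
    p = q := by
  apply Polynomial.eq_of_infinite_eval_eq
  exact Set.Infinite.mono (fun x hx => h x hx) (Set.Ioi_infinite 0)

lemma rec_of_eval (p : Polynomial ℝ) (lam : ℝ)
    (h : ∀ s : ℝ, 0 < s →
      -(s / 2) * (p.derivative.derivative.eval s) + s * (p.derivative.eval s)
        = lam * p.eval s) :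
    ∀ k : ℕ, (k:ℝ) * p.coeff k - ((k:ℝ)*((k:ℝ)+1)/2) * p.coeff (k+1) = lam * p.coeff k := by
  have hpoly : X * derivative p - C (2⁻¹:ℝ) * (X * derivative (derivative p)) = C lam * p := by
    apply eq_of_eval_pos
    intro s hs
    have := h s hs
    simp only [eval_sub, eval_mul, eval_X, eval_C]
    linarith
  intro k
  have h2 : (X * derivative p - C (2⁻¹:ℝ) * (X * derivative (derivative p))).coeff k
      = (C lam * p).coeff k := by rw [hpoly]
  rw [l_coeff, coeff_C_mul] at h2
  exact h2

lemma eval_of_rec (p : Polynomial ℝ) (lam : ℝ)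
    (h : ∀ k : ℕ, (k:ℝ) * p.coeff k - ((k:ℝ)*((k:ℝ)+1)/2) * p.coeff (k+1) = lam * p.coeff k) :
    ∀ s : ℝ, 0 < s →
      -(s / 2) * (p.derivative.derivative.eval s) + s * (p.derivative.eval s)
        = lam * p.eval s := by
  have hpoly : X * derivative p - C (2⁻¹:ℝ) * (X * derivative (derivative p)) = C lam * p := by
    ext k
    rw [l_coeff, coeff_C_mul]
    exact h k
  intro s hs
  have := congrArg (fun r => Polynomial.eval s r) hpoly
  simp only [eval_sub, eval_mul, eval_X, eval_C] at this
  linarith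

noncomputable def dcoef (n : ℕ) : ℕ → ℝ
  | 0 => 1
  | (j+1) => (((n:ℝ) - j - 1) * ((n:ℝ) - j)) / (-(2 * ((j:ℝ) + 1))) * dcoef n j

noncomputable def Pn (n : ℕ) : Polynomial ℝ :=
  ∑ k ∈ Finset.range (n+1), C (dcoef n (n - k)) * X ^ k

lemma coeff_Pn (n k : ℕ) :
    (Pn n).coeff k = if k ≤ n then dcoef n (n - k) else 0 := by
  unfold Pn
  rw [finset_sum_coeff]
  simp only [coeff_C_mul, coeff_X_pow, mul_ite, mul_one, mul_zero]
  rw [Finset.sum_ite_eq (Finset.range (n+1)) k (fun k => dcoef n (n - k))]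
  simp [Nat.lt_succ_iff]

lemma dcoef_n (n : ℕ) (hn : 1 ≤ n) : dcoef n n = 0 := by
  obtain ⟨m, rfl⟩ : ∃ m, n = m + 1 := ⟨n - 1, (Nat.succ_pred_eq_of_pos hn).symm⟩
  show dcoef (m+1) (m+1) = 0
  rw [dcoef]
  push_cast
  ring_nf

lemma coeff_Pn_n (n : ℕ) : (Pn n).coeff n = 1 := by
  rw [coeff_Pn]
  simp [dcoef]

lemma natDegree_Pn (n : ℕ) : (Pn n).natDegree = n := by
  apply le_antisymm
  · rw [natDegree_le_iff_coeff_eq_zero]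
    intro m hm
    rw [coeff_Pn]
    simp [Nat.not_le.mpr hm]
  · apply le_natDegree_of_ne_zero
    rw [coeff_Pn_n]
    norm_num

lemma Pn_ne_zero (n : ℕ) : Pn n ≠ 0 := fun h => by simpa [h] using coeff_Pn_n n

lemma Pn_coeff_zero (n : ℕ) (hn : 1 ≤ n) : (Pn n).coeff 0 = 0 := by
  rw [coeff_Pn]
  simp [dcoef_n n hn]

lemma Pn_rec (n : ℕ) (k : ℕ) :
    (k:ℝ) * (Pn n).coeff k - ((k:ℝ)*((k:ℝ)+1)/2) * (Pn n).coeff (k+1)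
      = (n:ℝ) * (Pn n).coeff k := by
  rcases lt_trichotomy k n with hk | rfl | hk
  · have h1 : k ≤ n := hk.le
    have h2 : k + 1 ≤ n := hk
    rw [coeff_Pn, coeff_Pn, if_pos h1, if_pos h2]
    obtain ⟨j, hj⟩ : ∃ j, n - k = j + 1 := ⟨n - k - 1, by omega⟩
    have hk1 : n - (k+1) = j := by omega
    rw [hj, hk1, dcoef]
    have hjr : (j:ℝ) = (n:ℝ) - k - 1 := by
      have : j = n - k - 1 := by omega
      rw [this, Nat.cast_sub (show 1 ≤ n - k by omega), Nat.cast_sub h1]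
      push_cast
      ring
    rw [hjr]
    have hne : (n:ℝ) - k ≠ 0 := by
      have : (k:ℝ) < n := by exact_mod_cast hk
      intro h; nlinarith
    have hne' : (n:ℝ) - k - 1 + 1 ≠ 0 := by rw [sub_add_cancel]; exact hne
    field_simp
    ring
  · rw [coeff_Pn_n, coeff_Pn, if_neg (by omega)]
    ring
  · rw [coeff_Pn, coeff_Pn, if_neg (by omega), if_neg (by omega)]
    ring

lemma coeff_step (p : Polynomial ℝ) (n : ℕ)
    (hrec : ∀ k : ℕ, (k:ℝ) * p.coeff k - ((k:ℝ)*((k:ℝ)+1)/2) * p.coeff (k+1)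
      = (n:ℝ) * p.coeff k)
    (k : ℕ) (hk : k < n) :
    p.coeff k = ((k:ℝ)*((k:ℝ)+1)/2) / ((k:ℝ) - n) * p.coeff (k+1) := by
  have h := hrec k
  have hne : (k:ℝ) - n ≠ 0 := by
    have : (k:ℝ) < n := by exact_mod_cast hk
    intro h'; nlinarith
  field_simp
  linear_combination 2 * h

theorem stmt_11 (n : ℕ) (hn : 1 ≤ n) :
    (∀ lam : ℝ,
      ((∃ p : Polynomial ℝ, p ≠ 0 ∧ p.coeff 0 = 0 ∧ p.natDegree = n ∧
          ∀ s : ℝ, 0 < s →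
            -(s / 2) * (p.derivative.derivative.eval s) + s * (p.derivative.eval s)
              = lam * p.eval s)
        ↔ lam = n)) ∧
    (∀ p q : Polynomial ℝ,
      p ≠ 0 → p.coeff 0 = 0 → p.natDegree = n →
      (∀ s : ℝ, 0 < s →
        -(s / 2) * (p.derivative.derivative.eval s) + s * (p.derivative.eval s)
          = n * p.eval s) →
      q ≠ 0 → q.coeff 0 = 0 → q.natDegree = n →
      (∀ s : ℝ, 0 < s →
        -(s / 2) * (q.derivative.derivative.eval s) + s * (q.derivative.eval s)
          = n * q.eval s) →
      ∃ c : ℝ, q = c • p) := by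
  constructor
  · intro lam
    constructor
    · rintro ⟨p, hp0, hpc0, hpdeg, hpe⟩
      have hrec := rec_of_eval p lam hpe
      have h := hrec n
      have hzero : p.coeff (n+1) = 0 :=
        coeff_eq_zero_of_natDegree_lt (by rw [hpdeg]; omega)
      rw [hzero] at h
      have han : p.coeff n ≠ 0 := by
        have := Polynomial.leadingCoeff_ne_zero.mpr hp0
        rwa [Polynomial.leadingCoeff, hpdeg] at this
      have : ((n:ℝ) - lam) * p.coeff n = 0 := by linarith
      rcases mul_eq_zero.mp this with h' | h'
      · linarith
      · exact absurd h' han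
    · rintro rfl
      exact ⟨Pn n, Pn_ne_zero n, Pn_coeff_zero n hn, natDegree_Pn n,
        eval_of_rec _ _ (Pn_rec n)⟩
  · intro p q hp0 hpc0 hpdeg hpe hq0 hqc0 hqdeg hqe
    have hprec := rec_of_eval p (n:ℝ) hpe
    have hqrec := rec_of_eval q (n:ℝ) hqe
    have hpn : p.coeff n ≠ 0 := by
      have := Polynomial.leadingCoeff_ne_zero.mpr hp0
      rwa [Polynomial.leadingCoeff, hpdeg] at this
    set c : ℝ := q.coeff n / p.coeff n with hc
    have key : ∀ j : ℕ, q.coeff (n - j) = c * p.coeff (n - j) := by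
      intro j
      induction j with
      | zero =>
        simp only [Nat.sub_zero, hc]
        field_simp
      | succ j ih =>
        by_cases hj : n ≤ j + 1
        · have h0 : n - (j+1) = 0 := by omega
          rw [h0, hqc0, hpc0]
          ring
        · have hk : n - (j+1) < n := by omega
          have h1 : (n - (j+1)) + 1 = n - j := by omega
          rw [coeff_step q n hqrec _ hk, coeff_step p n hprec _ hk, h1, ih]
          ring
    refine ⟨c, ?_⟩
    ext m
    rw [Polynomial.coeff_smul, smul_eq_mul]
    by_cases hm : m ≤ n
    · have := key (n - m)
      rwa [show n - (n - m) = m by omega] at this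
    · rw [coeff_eq_zero_of_natDegree_lt (by rw [hqdeg]; omega),
        coeff_eq_zero_of_natDegree_lt (by rw [hpdeg]; omega)]
      ring
end

section
/- Define G₀(s,t) = (1/2)(e^{2·min(s,t)} − 1) and w₀(s) = 2s^{-1}e^{-2s}. Then ∫₀^∞ ∫₀^∞ |G₀(s,t)|² w₀(s) w₀(t) dt ds ≤ 5; in particular the integral operator with kernel G₀ on L²((0,∞), w₀ ds) is Hilbert–Schmidt. -/
open MeasureTheory Real Set

/-- The exponential tail integral bound: for `s > 0`,
`∫_{t>0} exp(-2|s-t|) dt ≤ 1`. -/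
lemma aux_exp_int (s : ℝ) (hs : 0 < s) :
    ∫⁻ t in Ioi (0:ℝ), ENNReal.ofReal (Real.exp (-2 * |s - t|)) ≤ 1 := by
  rw [show Ioi (0:ℝ) = Ioc 0 s ∪ Ioi s from (Ioc_union_Ioi_eq_Ioi hs.le).symm]
  have h1 : ∫⁻ t in Ioc (0:ℝ) s, ENNReal.ofReal (Real.exp (-2 * |s - t|))
      ≤ ENNReal.ofReal (1/2) := by
    have hmono : ∫⁻ t in Ioc (0:ℝ) s, ENNReal.ofReal (Real.exp (-2 * |s - t|))
        ≤ ∫⁻ t in Ioc (0:ℝ) s, ENNReal.ofReal (Real.exp (-2 * (s - t))) := by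
      refine setLIntegral_mono' measurableSet_Ioc fun t htm => ?_
      rw [abs_of_nonneg (by linarith [htm.2] : (0:ℝ) ≤ s - t)]
    refine hmono.trans ?_
    have hc : Continuous fun t : ℝ => Real.exp (-2 * (s - t)) :=
      Real.continuous_exp.comp (continuous_const.mul (continuous_const.sub continuous_id))
    rw [← ofReal_integral_eq_lintegral_ofReal (hc.integrableOn_Ioc)
      (ae_of_all _ fun t => (Real.exp_pos _).le)]
    apply ENNReal.ofReal_le_ofReal
    rw [← intervalIntegral.integral_of_le hs.le]
    have hderiv : ∀ t ∈ Set.uIcc (0:ℝ) s,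
        HasDerivAt (fun u : ℝ => Real.exp (-2 * (s - u)) / 2) (Real.exp (-2 * (s - t))) t := by
      intro t _
      have := (((hasDerivAt_id t).const_sub s).const_mul (-2 : ℝ)).exp.div_const 2
      simp only [id_eq] at this
      refine this.congr_deriv ?_
      ring
    rw [intervalIntegral.integral_eq_sub_of_hasDerivAt hderiv (hc.intervalIntegrable 0 s)]
    have h0 : (0:ℝ) < Real.exp (-2 * (s - 0)) := Real.exp_pos _
    simp only [sub_self, mul_zero, Real.exp_zero]
    nlinarith [Real.exp_pos (-2 * (s - 0))]
  have h2 : ∫⁻ t in Ioi s, ENNReal.ofReal (Real.exp (-2 * |s - t|))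
      ≤ ENNReal.ofReal (1/2) := by
    have hmono : ∫⁻ t in Ioi s, ENNReal.ofReal (Real.exp (-2 * |s - t|))
        ≤ ∫⁻ t in Ioi s, ENNReal.ofReal (Real.exp (2 * s) * Real.exp (-2 * t)) := by
      refine setLIntegral_mono' measurableSet_Ioi fun t htm => ?_
      apply ENNReal.ofReal_le_ofReal
      rw [abs_of_nonpos (by linarith [mem_Ioi.mp htm] : s - t ≤ 0), ← Real.exp_add]
      apply le_of_eq; congr 1; ring
    refine hmono.trans ?_
    have hint : IntegrableOn (fun t : ℝ => Real.exp (2 * s) * Real.exp (-2 * t)) (Ioi s) :=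
      (exp_neg_integrableOn_Ioi s (by norm_num : (0:ℝ) < 2)).const_mul _
    rw [← ofReal_integral_eq_lintegral_ofReal hint
      (ae_of_all _ fun t => by positivity)]
    apply ENNReal.ofReal_le_ofReal
    rw [integral_const_mul]
    have hval : (∫ t in Ioi s, Real.exp (-2 * t)) = 2⁻¹ * Real.exp (-(2 * s)) := by
      have := integral_comp_mul_left_Ioi (fun x => Real.exp (-x)) s (by norm_num : (0:ℝ) < 2)
      simp only [smul_eq_mul, integral_exp_neg_Ioi] at this
      simpa only [neg_mul] using this
    rw [hval]
    have : Real.exp (2 * s) * Real.exp (-(2 * s)) = 1 := by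
      rw [← Real.exp_add]; simp
    nlinarith
  calc ∫⁻ t in Ioc (0:ℝ) s ∪ Ioi s, ENNReal.ofReal (Real.exp (-2 * |s - t|))
      ≤ (∫⁻ t in Ioc (0:ℝ) s, ENNReal.ofReal (Real.exp (-2 * |s - t|)))
        + ∫⁻ t in Ioi s, ENNReal.ofReal (Real.exp (-2 * |s - t|)) := lintegral_union_le _ _ _
    _ ≤ ENNReal.ofReal (1/2) + ENNReal.ofReal (1/2) := add_le_add h1 h2
    _ = 1 := by rw [← ENNReal.ofReal_add (by norm_num) (by norm_num)]; norm_num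

/-- The weight integral bound: `∫_{s>0} (min 2 s⁻¹)² ds ≤ 4`. -/
lemma aux_pow_int :
    ∫⁻ s in Ioi (0:ℝ), ENNReal.ofReal ((min 2 s⁻¹)^2) ≤ ENNReal.ofReal 4 := by
  rw [show Ioi (0:ℝ) = Ioc 0 (1/2) ∪ Ioi (1/2) from (Ioc_union_Ioi_eq_Ioi (by norm_num)).symm]
  have h1 : ∫⁻ s in Ioc (0:ℝ) (1/2), ENNReal.ofReal ((min 2 s⁻¹)^2) ≤ ENNReal.ofReal 2 := by
    calc ∫⁻ s in Ioc (0:ℝ) (1/2), ENNReal.ofReal ((min 2 s⁻¹)^2)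
        ≤ ∫⁻ _ in Ioc (0:ℝ) (1/2), ENNReal.ofReal 4 := by
          refine setLIntegral_mono' measurableSet_Ioc fun t htm => ?_
          apply ENNReal.ofReal_le_ofReal
          have h0 : 0 ≤ min 2 t⁻¹ := le_min (by norm_num) (inv_nonneg.mpr htm.1.le)
          have h2 : min 2 t⁻¹ ≤ 2 := min_le_left _ _
          nlinarith
      _ = ENNReal.ofReal 4 * volume (Ioc (0:ℝ) (1/2)) := setLIntegral_const _ _
      _ = ENNReal.ofReal 2 := by
          rw [Real.volume_Ioc, ← ENNReal.ofReal_mul (by norm_num)]; norm_num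
  have h2 : ∫⁻ s in Ioi (1/2:ℝ), ENNReal.ofReal ((min 2 s⁻¹)^2) ≤ ENNReal.ofReal 2 := by
    calc ∫⁻ s in Ioi (1/2:ℝ), ENNReal.ofReal ((min 2 s⁻¹)^2)
        ≤ ∫⁻ s in Ioi (1/2:ℝ), ENNReal.ofReal (s ^ (-2:ℝ)) := by
          refine setLIntegral_mono' measurableSet_Ioi fun t htm => ?_
          apply ENNReal.ofReal_le_ofReal
          have ht : (0:ℝ) < t := lt_trans (by norm_num) (mem_Ioi.mp htm)
          have h0 : 0 ≤ min 2 t⁻¹ := le_min (by norm_num) (inv_nonneg.mpr ht.le)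
          have h1 : min 2 t⁻¹ ≤ t⁻¹ := min_le_right _ _
          have heq : t ^ (-2:ℝ) = (t⁻¹)^2 := by
            rw [show (-2:ℝ) = -((2:ℕ):ℝ) by norm_num, Real.rpow_neg ht.le,
              Real.rpow_natCast, inv_pow]
          rw [heq]
          exact pow_le_pow_left₀ h0 h1 2
      _ = ENNReal.ofReal (∫ s in Ioi (1/2:ℝ), s ^ (-2:ℝ)) := by
          rw [← ofReal_integral_eq_lintegral_ofReal
            (integrableOn_Ioi_rpow_of_lt (by norm_num) (by norm_num))]
          filter_upwards [ae_restrict_mem measurableSet_Ioi] with x hx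
          exact Real.rpow_nonneg (by linarith [mem_Ioi.mp hx] : (0:ℝ) ≤ x) _
      _ = ENNReal.ofReal 2 := by
          rw [integral_Ioi_rpow_of_lt (by norm_num) (by norm_num)]
          norm_num [show (-2:ℝ) + 1 = -1 from by norm_num, Real.rpow_neg_one]
  calc ∫⁻ s in Ioc (0:ℝ) (1/2) ∪ Ioi (1/2), ENNReal.ofReal ((min 2 s⁻¹)^2)
      ≤ _ + _ := lintegral_union_le _ _ _
    _ ≤ ENNReal.ofReal 2 + ENNReal.ofReal 2 := add_le_add h1 h2
    _ = ENNReal.ofReal 4 := by rw [← ENNReal.ofReal_add (by norm_num) (by norm_num)]; norm_num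

/-- The key pointwise bound in the ordered case `0 < s ≤ t`. -/
lemma key_ordered {s t : ℝ} (hs : 0 < s) (hst : s ≤ t) :
    |(1/2 : ℝ) * (Real.exp (2*s) - 1)|^2 * (2*s⁻¹*Real.exp (-2*s)) * (2*t⁻¹*Real.exp (-2*t))
    ≤ (min 2 s⁻¹ * min 2 t⁻¹) * Real.exp (-2*(t-s)) := by
  have ht : 0 < t := lt_of_lt_of_le hs hst
  have hx1 : (1:ℝ) ≤ Real.exp (2*s) := by
    rw [← Real.exp_zero]; exact Real.exp_le_exp.mpr (by linarith)
  have habs : |(1/2 : ℝ) * (Real.exp (2*s) - 1)| = 1/2 * (Real.exp (2*s) - 1) :=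
    abs_of_nonneg (by nlinarith)
  have hes : Real.exp (-2*s) ≤ 1 := by
    rw [← Real.exp_zero]; exact Real.exp_le_exp.mpr (by linarith)
  have het : Real.exp (-2*t) ≤ Real.exp (-2*s) := Real.exp_le_exp.mpr (by linarith)
  have hes0 : 0 < Real.exp (-2*s) := Real.exp_pos _
  have het0 : 0 < Real.exp (-2*t) := Real.exp_pos _
  set a : ℝ := 1 - Real.exp (-2*s) with ha
  set b : ℝ := 1 - Real.exp (-2*t) with hb
  have ha0 : 0 ≤ a := by simp only [ha]; linarith
  have hb0 : 0 ≤ b := by simp only [hb]; linarith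
  have hab : a ≤ b := by simp only [ha, hb]; linarith
  have ha2s : a ≤ 2*s := by
    have := Real.add_one_le_exp (-2*s)
    simp only [ha]; linarith
  have hb2t : b ≤ 2*t := by
    have := Real.add_one_le_exp (-2*t)
    simp only [hb]; linarith
  have hA : a * s⁻¹ ≤ min 2 s⁻¹ := by
    refine le_min ?_ ?_
    · have := mul_le_mul_of_nonneg_right ha2s (inv_nonneg.mpr hs.le)
      rwa [mul_assoc, mul_inv_cancel₀ hs.ne', mul_one] at this
    · have : a ≤ 1 := by simp only [ha]; linarith
      calc a * s⁻¹ ≤ 1 * s⁻¹ := mul_le_mul_of_nonneg_right this (inv_nonneg.mpr hs.le)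
        _ = s⁻¹ := one_mul _
  have hB : b * t⁻¹ ≤ min 2 t⁻¹ := by
    refine le_min ?_ ?_
    · have := mul_le_mul_of_nonneg_right hb2t (inv_nonneg.mpr ht.le)
      rwa [mul_assoc, mul_inv_cancel₀ ht.ne', mul_one] at this
    · have : b ≤ 1 := by simp only [hb]; linarith
      calc b * t⁻¹ ≤ 1 * t⁻¹ := mul_le_mul_of_nonneg_right this (inv_nonneg.mpr ht.le)
        _ = t⁻¹ := one_mul _
  have hEq : |(1/2 : ℝ) * (Real.exp (2*s) - 1)|^2 * (2*s⁻¹*Real.exp (-2*s))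
      * (2*t⁻¹*Real.exp (-2*t))
      = (a * s⁻¹) * (a * t⁻¹) * Real.exp (-2*(t-s)) := by
    rw [habs]
    have e1 : Real.exp (-2*s) = (Real.exp (2*s))⁻¹ := by
      rw [← Real.exp_neg]; ring_nf
    have e2 : Real.exp (-2*t) = (Real.exp (2*t))⁻¹ := by
      rw [← Real.exp_neg]; ring_nf
    have e3 : Real.exp (-2*(t-s)) = Real.exp (2*s) * (Real.exp (2*t))⁻¹ := by
      rw [← Real.exp_neg, ← Real.exp_add]; ring_nf
    have hxne : Real.exp (2*s) ≠ 0 := (Real.exp_pos _).ne'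
    have hyne : Real.exp (2*t) ≠ 0 := (Real.exp_pos _).ne'
    rw [ha, e1, e2, e3]
    field_simp
  rw [hEq]
  have hmin_t0 : 0 ≤ min 2 t⁻¹ := le_min (by norm_num) (inv_nonneg.mpr ht.le)
  have hat : a * t⁻¹ ≤ min 2 t⁻¹ := by
    refine le_trans ?_ hB
    exact mul_le_mul_of_nonneg_right hab (inv_nonneg.mpr ht.le)
  have hfinal : (a * s⁻¹) * (a * t⁻¹) ≤ min 2 s⁻¹ * min 2 t⁻¹ :=
    mul_le_mul hA hat (mul_nonneg ha0 (inv_nonneg.mpr ht.le))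
      (le_trans (mul_nonneg ha0 (inv_nonneg.mpr hs.le)) hA)
  exact mul_le_mul_of_nonneg_right hfinal (Real.exp_nonneg _)

/-- The main pointwise bound for the iterated integral. -/
lemma keyPt (s t : ℝ) (ht : 0 < t) :
    ENNReal.ofReal (|(1/2 : ℝ) * (Real.exp (2 * min s t) - 1)|^2
        * (2*s⁻¹*Real.exp (-2*s)) * (2*t⁻¹*Real.exp (-2*t)))
      ≤ ENNReal.ofReal ((min 2 s⁻¹)^2/2 * Real.exp (-2*|s-t|))
        + ENNReal.ofReal ((min 2 t⁻¹)^2/2 * Real.exp (-2*|s-t|)) := by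
  rcases le_or_gt s 0 with hs | hs
  · have h2 : 2*s⁻¹*Real.exp (-2*s) ≤ 0 := by
      have : s⁻¹ ≤ 0 := inv_nonpos.mpr hs
      have := Real.exp_pos (-2*s)
      nlinarith
    have h3 : 0 ≤ 2*t⁻¹*Real.exp (-2*t) := by positivity
    have hle : |(1/2 : ℝ) * (Real.exp (2 * min s t) - 1)|^2
        * (2*s⁻¹*Real.exp (-2*s)) * (2*t⁻¹*Real.exp (-2*t)) ≤ 0 :=
      mul_nonpos_of_nonpos_of_nonneg
        (mul_nonpos_of_nonneg_of_nonpos (sq_nonneg _) h2) h3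
    rw [ENNReal.ofReal_eq_zero.mpr hle]
    exact zero_le
  · have hkey : |(1/2 : ℝ) * (Real.exp (2 * min s t) - 1)|^2
        * (2*s⁻¹*Real.exp (-2*s)) * (2*t⁻¹*Real.exp (-2*t))
        ≤ (min 2 s⁻¹ * min 2 t⁻¹) * Real.exp (-2*|s-t|) := by
      rcases le_total s t with h | h
      · rw [min_eq_left h, abs_of_nonpos (by linarith : s - t ≤ 0), neg_sub]
        exact key_ordered hs h
      · rw [min_eq_right h, abs_of_nonneg (by linarith : (0:ℝ) ≤ s - t)]
        have hko := key_ordered ht h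
        calc |(1/2 : ℝ) * (Real.exp (2*t) - 1)|^2
              * (2*s⁻¹*Real.exp (-2*s)) * (2*t⁻¹*Real.exp (-2*t))
            = |(1/2 : ℝ) * (Real.exp (2*t) - 1)|^2
              * (2*t⁻¹*Real.exp (-2*t)) * (2*s⁻¹*Real.exp (-2*s)) := by ring
          _ ≤ (min 2 t⁻¹ * min 2 s⁻¹) * Real.exp (-2*(s-t)) := hko
          _ = (min 2 s⁻¹ * min 2 t⁻¹) * Real.exp (-2*(s-t)) := by ring
    calc ENNReal.ofReal (|(1/2 : ℝ) * (Real.exp (2 * min s t) - 1)|^2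
          * (2*s⁻¹*Real.exp (-2*s)) * (2*t⁻¹*Real.exp (-2*t)))
        ≤ ENNReal.ofReal (((min 2 s⁻¹)^2/2 + (min 2 t⁻¹)^2/2) * Real.exp (-2*|s-t|)) := by
          apply ENNReal.ofReal_le_ofReal
          refine hkey.trans ?_
          have hhint := mul_nonneg (sq_nonneg (min 2 s⁻¹ - min 2 t⁻¹))
            (Real.exp_nonneg (-2*|s-t|))
          nlinarith
      _ = ENNReal.ofReal ((min 2 s⁻¹)^2/2 * Real.exp (-2*|s-t|))
          + ENNReal.ofReal ((min 2 t⁻¹)^2/2 * Real.exp (-2*|s-t|)) := by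
          rw [add_mul, ENNReal.ofReal_add (by positivity) (by positivity)]

theorem stmt_12
    (G₀ : ℝ → ℝ → ℝ) (hG : G₀ = fun s t => (1 / 2) * (Real.exp (2 * min s t) - 1))
    (w₀ : ℝ → ℝ) (hw : w₀ = fun s => 2 * s⁻¹ * Real.exp (-2 * s)) :
    ∫⁻ s in Ioi (0:ℝ), ∫⁻ t in Ioi (0:ℝ),
        ENNReal.ofReal (|G₀ s t| ^ 2 * w₀ s * w₀ t) ≤ 5 := by
  subst hG hw
  -- measurability facts
  have measA : ∀ s : ℝ, Measurable fun t : ℝ =>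
      ENNReal.ofReal ((min 2 s⁻¹)^2/2 * Real.exp (-2*|s - t|)) := by
    intro s
    fun_prop
  have measAu : Measurable (Function.uncurry fun s t : ℝ =>
      ENNReal.ofReal ((min 2 s⁻¹)^2/2 * Real.exp (-2*|s - t|))) := by
    fun_prop
  have measBu : Measurable (Function.uncurry fun s t : ℝ =>
      ENNReal.ofReal ((min 2 t⁻¹)^2/2 * Real.exp (-2*|s - t|))) := by
    fun_prop
  have measB : ∀ s : ℝ, Measurable fun t : ℝ =>
      ENNReal.ofReal ((min 2 t⁻¹)^2/2 * Real.exp (-2*|s - t|)) := by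
    intro s
    fun_prop
  have meas_exp : ∀ s : ℝ, Measurable fun t : ℝ =>
      ENNReal.ofReal (Real.exp (-2*|s - t|)) := by
    intro s
    fun_prop
  have meas_exp' : ∀ t : ℝ, Measurable fun s : ℝ =>
      ENNReal.ofReal (Real.exp (-2*|s - t|)) := by
    intro t
    fun_prop
  -- Step 1: pointwise domination
  have step1 : ∫⁻ s in Ioi (0:ℝ), ∫⁻ t in Ioi (0:ℝ),
      ENNReal.ofReal (|(fun s t => (1/2 : ℝ) * (Real.exp (2 * min s t) - 1)) s t| ^ 2
        * (fun s => 2 * s⁻¹ * Real.exp (-2 * s)) s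
        * (fun s => 2 * s⁻¹ * Real.exp (-2 * s)) t)
      ≤ ∫⁻ s in Ioi (0:ℝ), ∫⁻ t in Ioi (0:ℝ),
        (ENNReal.ofReal ((min 2 s⁻¹)^2/2 * Real.exp (-2*|s - t|))
          + ENNReal.ofReal ((min 2 t⁻¹)^2/2 * Real.exp (-2*|s - t|))) := by
    refine lintegral_mono fun s => ?_
    refine setLIntegral_mono' measurableSet_Ioi fun t htm => ?_
    simpa using keyPt s t (mem_Ioi.mp htm)
  refine le_trans step1 ?_
  -- Step 2: split the sum
  have step2 : ∫⁻ s in Ioi (0:ℝ), ∫⁻ t in Ioi (0:ℝ),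
      (ENNReal.ofReal ((min 2 s⁻¹)^2/2 * Real.exp (-2*|s - t|))
        + ENNReal.ofReal ((min 2 t⁻¹)^2/2 * Real.exp (-2*|s - t|)))
      = (∫⁻ s in Ioi (0:ℝ), ∫⁻ t in Ioi (0:ℝ),
          ENNReal.ofReal ((min 2 s⁻¹)^2/2 * Real.exp (-2*|s - t|)))
        + ∫⁻ s in Ioi (0:ℝ), ∫⁻ t in Ioi (0:ℝ),
          ENNReal.ofReal ((min 2 t⁻¹)^2/2 * Real.exp (-2*|s - t|)) := by
    have h1 : ∀ s : ℝ, ∫⁻ t in Ioi (0:ℝ),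
        (ENNReal.ofReal ((min 2 s⁻¹)^2/2 * Real.exp (-2*|s - t|))
          + ENNReal.ofReal ((min 2 t⁻¹)^2/2 * Real.exp (-2*|s - t|)))
        = (∫⁻ t in Ioi (0:ℝ), ENNReal.ofReal ((min 2 s⁻¹)^2/2 * Real.exp (-2*|s - t|)))
          + ∫⁻ t in Ioi (0:ℝ), ENNReal.ofReal ((min 2 t⁻¹)^2/2 * Real.exp (-2*|s - t|)) :=
      fun s => lintegral_add_left (measA s) _
    simp_rw [h1]
    exact lintegral_add_left (Measurable.lintegral_prod_right measAu) _
  rw [step2]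
  -- bound for the first term
  have hT1 : ∀ (p : ℝ → ℝ), (∀ s, 0 ≤ p s) → (Measurable p) →
      (∫⁻ s in Ioi (0:ℝ), ENNReal.ofReal (p s) ≤ ENNReal.ofReal 4) → True := fun _ _ _ _ => trivial
  have term1 : (∫⁻ s in Ioi (0:ℝ), ∫⁻ t in Ioi (0:ℝ),
      ENNReal.ofReal ((min 2 s⁻¹)^2/2 * Real.exp (-2*|s - t|))) ≤ ENNReal.ofReal 2 := by
    have inner_le : ∀ s ∈ Ioi (0:ℝ), (∫⁻ t in Ioi (0:ℝ),
        ENNReal.ofReal ((min 2 s⁻¹)^2/2 * Real.exp (-2*|s - t|)))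
        ≤ ENNReal.ofReal ((min 2 s⁻¹)^2/2) := by
      intro s hsm
      have : ∀ t : ℝ, ENNReal.ofReal ((min 2 s⁻¹)^2/2 * Real.exp (-2*|s - t|))
          = ENNReal.ofReal ((min 2 s⁻¹)^2/2) * ENNReal.ofReal (Real.exp (-2*|s - t|)) :=
        fun t => ENNReal.ofReal_mul (by positivity)
      simp_rw [this]
      rw [lintegral_const_mul _ (meas_exp s)]
      calc ENNReal.ofReal ((min 2 s⁻¹)^2/2) * ∫⁻ t in Ioi (0:ℝ),
            ENNReal.ofReal (Real.exp (-2*|s - t|))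
          ≤ ENNReal.ofReal ((min 2 s⁻¹)^2/2) * 1 :=
            mul_le_mul_right (aux_exp_int s (mem_Ioi.mp hsm)) _
        _ = ENNReal.ofReal ((min 2 s⁻¹)^2/2) := mul_one _
    calc (∫⁻ s in Ioi (0:ℝ), ∫⁻ t in Ioi (0:ℝ),
          ENNReal.ofReal ((min 2 s⁻¹)^2/2 * Real.exp (-2*|s - t|)))
        ≤ ∫⁻ s in Ioi (0:ℝ), ENNReal.ofReal ((min 2 s⁻¹)^2/2) :=
          setLIntegral_mono' measurableSet_Ioi inner_le
      _ ≤ ENNReal.ofReal 2 := by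
          have : ∀ s : ℝ, ENNReal.ofReal ((min 2 s⁻¹)^2/2)
              = ENNReal.ofReal ((min 2 s⁻¹)^2) * ENNReal.ofReal (1/2) := fun s => by
            rw [← ENNReal.ofReal_mul (by positivity)]; ring_nf
          simp_rw [this]
          rw [lintegral_mul_const _
            (by fun_prop : Measurable fun x : ℝ => ENNReal.ofReal ((min 2 x⁻¹)^2))]
          calc (∫⁻ s in Ioi (0:ℝ), ENNReal.ofReal ((min 2 s⁻¹)^2)) * ENNReal.ofReal (1/2)
              ≤ ENNReal.ofReal 4 * ENNReal.ofReal (1/2) := mul_le_mul_left aux_pow_int _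
            _ = ENNReal.ofReal 2 := by rw [← ENNReal.ofReal_mul (by norm_num)]; norm_num
  -- bound for the second term, via Tonelli swap
  have term2 : (∫⁻ s in Ioi (0:ℝ), ∫⁻ t in Ioi (0:ℝ),
      ENNReal.ofReal ((min 2 t⁻¹)^2/2 * Real.exp (-2*|s - t|))) ≤ ENNReal.ofReal 2 := by
    rw [lintegral_lintegral_swap measBu.aemeasurable]
    have inner_le : ∀ t ∈ Ioi (0:ℝ), (∫⁻ s in Ioi (0:ℝ),
        ENNReal.ofReal ((min 2 t⁻¹)^2/2 * Real.exp (-2*|s - t|)))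
        ≤ ENNReal.ofReal ((min 2 t⁻¹)^2/2) := by
      intro t htm
      have : ∀ s : ℝ, ENNReal.ofReal ((min 2 t⁻¹)^2/2 * Real.exp (-2*|s - t|))
          = ENNReal.ofReal ((min 2 t⁻¹)^2/2) * ENNReal.ofReal (Real.exp (-2*|s - t|)) :=
        fun s => ENNReal.ofReal_mul (by positivity)
      simp_rw [this]
      rw [lintegral_const_mul _ (meas_exp' t)]
      have habs : (∫⁻ s in Ioi (0:ℝ), ENNReal.ofReal (Real.exp (-2*|s - t|)))
          = ∫⁻ s in Ioi (0:ℝ), ENNReal.ofReal (Real.exp (-2*|t - s|)) := by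
        simp_rw [abs_sub_comm]
      calc ENNReal.ofReal ((min 2 t⁻¹)^2/2) * ∫⁻ s in Ioi (0:ℝ),
            ENNReal.ofReal (Real.exp (-2*|s - t|))
          ≤ ENNReal.ofReal ((min 2 t⁻¹)^2/2) * 1 := by
            rw [habs]; exact mul_le_mul_right (aux_exp_int t (mem_Ioi.mp htm)) _
        _ = ENNReal.ofReal ((min 2 t⁻¹)^2/2) := mul_one _
    calc (∫⁻ t in Ioi (0:ℝ), ∫⁻ s in Ioi (0:ℝ),
          ENNReal.ofReal ((min 2 t⁻¹)^2/2 * Real.exp (-2*|s - t|)))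
        ≤ ∫⁻ t in Ioi (0:ℝ), ENNReal.ofReal ((min 2 t⁻¹)^2/2) :=
          setLIntegral_mono' measurableSet_Ioi inner_le
      _ ≤ ENNReal.ofReal 2 := by
          have : ∀ t : ℝ, ENNReal.ofReal ((min 2 t⁻¹)^2/2)
              = ENNReal.ofReal ((min 2 t⁻¹)^2) * ENNReal.ofReal (1/2) := fun t => by
            rw [← ENNReal.ofReal_mul (by positivity)]; ring_nf
          simp_rw [this]
          rw [lintegral_mul_const _
            (by fun_prop : Measurable fun x : ℝ => ENNReal.ofReal ((min 2 x⁻¹)^2))]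
          calc (∫⁻ t in Ioi (0:ℝ), ENNReal.ofReal ((min 2 t⁻¹)^2)) * ENNReal.ofReal (1/2)
              ≤ ENNReal.ofReal 4 * ENNReal.ofReal (1/2) := mul_le_mul_left aux_pow_int _
            _ = ENNReal.ofReal 2 := by rw [← ENNReal.ofReal_mul (by norm_num)]; norm_num
  calc _ ≤ ENNReal.ofReal 2 + ENNReal.ofReal 2 := add_le_add term1 term2
    _ = ENNReal.ofReal 4 := by rw [← ENNReal.ofReal_add (by norm_num) (by norm_num)]; norm_num
    _ ≤ 5 := by
        rw [show (4:ℝ) = ((4:ℕ):ℝ) by norm_num, ENNReal.ofReal_natCast]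
        norm_num
end

section
/- Define K₀(s,t) = (st)^{-1/2} e^{-s}(e^{2·min(s,t)} − 1) e^{-t} for s,t > 0. Then K₀ ∈ L²((0,∞)², ds dt), i.e. ∫₀^∞∫₀^∞ K₀(s,t)² dt ds < ∞. -/
open MeasureTheory Real Set

noncomputable def phi13 (u : ℝ) : ℝ := (Real.exp (2*u) - 1)^2 * Real.exp (-(2*u)) / u
noncomputable def psi13 (u : ℝ) : ℝ := Real.exp (-(2*u)) / u

lemma sq_eq13 {s t : ℝ} (hs : 0 < s) (ht : 0 < t) :
    ((s * t) ^ (-(1:ℝ)/2) * Real.exp (-s) * (Real.exp (2 * min s t) - 1) * Real.exp (-t)) ^ 2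
      = phi13 (min s t) * psi13 (max s t) := by
  have hst : (0:ℝ) < s * t := by positivity
  have hpow : ((s*t) ^ (-(1:ℝ)/2))^2 = (s*t)⁻¹ := by
    rw [← Real.rpow_natCast ((s*t) ^ (-(1:ℝ)/2)) 2, ← Real.rpow_mul hst.le]
    norm_num [Real.rpow_neg_one]
  have e2 : ∀ x : ℝ, Real.exp (-x) ^ 2 = Real.exp (-(2*x)) := by
    intro x; rw [sq, ← Real.exp_add]; ring_nf
  rcases le_total s t with h | h
  · rw [min_eq_left h, max_eq_right h]
    unfold phi13 psi13
    rw [mul_pow, mul_pow, mul_pow, hpow, e2, e2]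
    field_simp
  · rw [min_eq_right h, max_eq_left h]
    unfold phi13 psi13
    rw [mul_pow, mul_pow, mul_pow, hpow, e2, e2]
    field_simp

lemma exp_lint13 (u : ℝ) :
    ∫⁻ v in Ioi u, ENNReal.ofReal (Real.exp (-(2*v))) = ENNReal.ofReal (Real.exp (-(2*u)) / 2) := by
  have hint : IntegrableOn (fun v : ℝ => Real.exp (-(2*v))) (Ioi u) := by
    simpa [neg_mul] using exp_neg_integrableOn_Ioi u (two_pos (α := ℝ))
  rw [← MeasureTheory.ofReal_integral_eq_lintegral_ofReal hint
      ((ae_restrict_iff' measurableSet_Ioi).2 (.of_forall fun x _ => (Real.exp_pos _).le))]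
  congr 1
  have := integral_comp_mul_left_Ioi (fun x => Real.exp (-x)) u (two_pos (α := ℝ))
  simp only [smul_eq_mul] at this
  rw [this, integral_exp_neg_Ioi]; ring

lemma tail13 {u : ℝ} (hu : 0 < u) :
    ∫⁻ v in Ioi u, ENNReal.ofReal (phi13 u * psi13 v)
      ≤ ENNReal.ofReal (min 4 (u^2)⁻¹ / 2) := by
  have hphi : 0 ≤ phi13 u := by unfold phi13; positivity
  have hmono : ∀ v ∈ Ioi u, ENNReal.ofReal (phi13 u * psi13 v)
      ≤ ENNReal.ofReal (phi13 u / u * Real.exp (-(2*v))) := by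
    intro v hv
    apply ENNReal.ofReal_le_ofReal
    have hv' : u ≤ v := le_of_lt hv
    have hv0 : 0 < v := hu.trans hv
    unfold psi13
    have hrw : phi13 u / u * Real.exp (-(2*v)) = phi13 u * (Real.exp (-(2*v)) / u) := by ring
    rw [hrw]
    gcongr
  calc ∫⁻ v in Ioi u, ENNReal.ofReal (phi13 u * psi13 v)
      ≤ ∫⁻ v in Ioi u, ENNReal.ofReal (phi13 u / u * Real.exp (-(2*v))) := by
        apply setLIntegral_mono ?_ hmono
        exact (measurable_const.mul ((measurable_id.const_mul 2).neg.exp)).ennreal_ofReal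
    _ = ENNReal.ofReal (phi13 u / u) * ENNReal.ofReal (Real.exp (-(2*u)) / 2) := by
        simp_rw [ENNReal.ofReal_mul (by positivity : (0:ℝ) ≤ phi13 u / u)]
        rw [lintegral_const_mul (μ := volume.restrict (Ioi u)) (ENNReal.ofReal (phi13 u / u))
          (f := fun v => ENNReal.ofReal (Real.exp (-(2*v)))) (by fun_prop), exp_lint13]
    _ ≤ ENNReal.ofReal (min 4 (u^2)⁻¹ / 2) := by
        rw [← ENNReal.ofReal_mul (by positivity)]
        apply ENNReal.ofReal_le_ofReal
        have key : phi13 u / u * (Real.exp (-(2*u)) / 2) = (1 - Real.exp (-(2*u)))^2 / u^2 / 2 := by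
          unfold phi13
          have : (Real.exp (2*u) - 1) * Real.exp (-(2*u)) = 1 - Real.exp (-(2*u)) := by
            rw [sub_mul, ← Real.exp_add]; simp
          have h' : (Real.exp (2*u) - 1)^2 * Real.exp (-(2*u)) * Real.exp (-(2*u))
              = (1 - Real.exp (-(2*u)))^2 := by rw [← this]; ring
          rw [← h']; ring
        rw [key]
        have h1 : 1 - Real.exp (-(2*u)) ≤ 1 := by nlinarith [Real.exp_pos (-(2*u))]
        have h2 : 1 - Real.exp (-(2*u)) ≤ 2*u := by nlinarith [Real.add_one_le_exp (-(2*u))]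
        have h0 : 0 ≤ 1 - Real.exp (-(2*u)) := by
          have : Real.exp (-(2*u)) ≤ 1 := Real.exp_le_one_iff.2 (by linarith)
          linarith
        have hmin : (1 - Real.exp (-(2*u)))^2 / u^2 ≤ min 4 (u^2)⁻¹ := by
          apply le_min
          · rw [div_le_iff₀ (by positivity)]; nlinarith
          · rw [div_le_iff₀ (by positivity), inv_mul_cancel₀ (by positivity)]; nlinarith
        linarith

lemma fin13 : ∫⁻ u in Ioi (0:ℝ), ENNReal.ofReal (min 4 (u^2)⁻¹ / 2) < ⊤ := by
  have hint : IntegrableOn (fun u : ℝ => min 4 (u^2)⁻¹ / 2) (Ioi 0) := by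
    have hmeas : Measurable (fun u : ℝ => min 4 (u^2)⁻¹ / 2) := by fun_prop
    rw [show Ioi (0:ℝ) = Ioc 0 1 ∪ Ioi 1 from (Ioc_union_Ioi_eq_Ioi zero_le_one).symm]
    apply IntegrableOn.union
    · apply Integrable.mono' (g := fun _ : ℝ => (2:ℝ))
        (integrableOn_const (μ := volume) (s := Ioc (0:ℝ) 1) (by simp))
        hmeas.aestronglyMeasurable.restrict
      refine .of_forall fun u => ?_
      have h1 : (0:ℝ) ≤ min 4 (u^2)⁻¹ / 2 := by positivity
      have h2 : min 4 (u^2)⁻¹ / 2 ≤ 2 := by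
        have := min_le_left (4:ℝ) (u^2)⁻¹; linarith
      rw [Real.norm_eq_abs, abs_of_nonneg h1]; exact h2
    · apply Integrable.mono' (g := fun u : ℝ => u ^ (-2:ℝ) / 2)
        ((integrableOn_Ioi_rpow_of_lt (by norm_num) one_pos).div_const 2)
        hmeas.aestronglyMeasurable.restrict
      refine (ae_restrict_iff' measurableSet_Ioi).2 (.of_forall fun u hu => ?_)
      have hu0 : (0:ℝ) < u := lt_trans one_pos hu
      have h1 : (0:ℝ) ≤ min 4 (u^2)⁻¹ / 2 := by positivity
      have h2 : u ^ (-2:ℝ) = (u^2)⁻¹ := by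
        rw [Real.rpow_neg hu0.le, Real.rpow_two]
      rw [Real.norm_eq_abs, abs_of_nonneg h1, h2]
      have := min_le_right (4:ℝ) (u^2)⁻¹; linarith
  exact hint.setLIntegral_lt_top

theorem stmt_13
    (K₀ : ℝ → ℝ → ℝ)
    (hK : K₀ = fun s t => (s * t) ^ (-(1:ℝ)/2) * Real.exp (-s)
        * (Real.exp (2 * min s t) - 1) * Real.exp (-t)) :
    ∫⁻ s in Ioi (0:ℝ), ∫⁻ t in Ioi (0:ℝ), ENNReal.ofReal (K₀ s t ^ 2) < ⊤ := by
  subst hK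
  set g : ℝ × ℝ → ENNReal := fun p =>
    ENNReal.ofReal (((p.1 * p.2) ^ (-(1:ℝ)/2) * Real.exp (-p.1)
      * (Real.exp (2 * min p.1 p.2) - 1) * Real.exp (-p.2)) ^ 2) with hg
  have hgmeas : Measurable g := by
    apply Measurable.ennreal_ofReal
    apply Measurable.pow_const
    fun_prop
  set F₁ : ℝ × ℝ → ENNReal := {p : ℝ × ℝ | p.2 ≤ p.1}.indicator g with hF₁
  set F₂ : ℝ × ℝ → ENNReal := {p : ℝ × ℝ | p.1 < p.2}.indicator g with hF₂
  have hset1 : MeasurableSet {p : ℝ × ℝ | p.2 ≤ p.1} :=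
    measurableSet_le measurable_snd measurable_fst
  have hset2 : MeasurableSet {p : ℝ × ℝ | p.1 < p.2} :=
    measurableSet_lt measurable_fst measurable_snd
  have hF₁meas : Measurable F₁ := hgmeas.indicator hset1
  have hF₂meas : Measurable F₂ := hgmeas.indicator hset2
  have hgsplit : ∀ p : ℝ × ℝ, g p = F₁ p + F₂ p := by
    intro p
    rcases le_or_gt p.2 p.1 with h | h
    · simp [hF₁, hF₂, Set.indicator_apply, h, not_lt.2 h]
    · simp [hF₁, hF₂, Set.indicator_apply, h, not_le.2 h]
  have step1 : ∫⁻ s in Ioi (0:ℝ), ∫⁻ t in Ioi (0:ℝ),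
      ENNReal.ofReal (((s * t) ^ (-(1:ℝ)/2) * Real.exp (-s)
        * (Real.exp (2 * min s t) - 1) * Real.exp (-t)) ^ 2)
      = (∫⁻ s in Ioi (0:ℝ), ∫⁻ t in Ioi (0:ℝ), F₁ (s, t))
        + ∫⁻ s in Ioi (0:ℝ), ∫⁻ t in Ioi (0:ℝ), F₂ (s, t) := by
    have h1 : ∀ s t : ℝ, ENNReal.ofReal (((s * t) ^ (-(1:ℝ)/2) * Real.exp (-s)
        * (Real.exp (2 * min s t) - 1) * Real.exp (-t)) ^ 2) = F₁ (s, t) + F₂ (s, t) :=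
      fun s t => hgsplit (s, t)
    simp_rw [h1]
    rw [← lintegral_add_left
      (hF₁meas.lintegral_prod_right' (ν := volume.restrict (Ioi 0)))]
    congr 1
    ext s
    exact lintegral_add_left (hF₁meas.comp (measurable_const.prodMk measurable_id)) _
  rw [step1]
  have bound₂ : ∫⁻ s in Ioi (0:ℝ), ∫⁻ t in Ioi (0:ℝ), F₂ (s, t)
      ≤ ∫⁻ s in Ioi (0:ℝ), ENNReal.ofReal (min 4 (s^2)⁻¹ / 2) := by
    apply setLIntegral_mono (by fun_prop)
    intro s hs
    have hs0 : (0:ℝ) < s := hs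
    have hrw : (fun t => F₂ (s, t)) = (Ioi s).indicator (fun t => g (s, t)) := by
      ext t; simp [hF₂, Set.indicator_apply, Set.mem_Ioi]
    calc ∫⁻ t in Ioi (0:ℝ), F₂ (s, t)
        = ∫⁻ t in Ioi s ∩ Ioi 0, g (s, t) := by
          rw [hrw, lintegral_indicator measurableSet_Ioi,
            Measure.restrict_restrict measurableSet_Ioi]
      _ = ∫⁻ t in Ioi s, g (s, t) := by
          have hss : Ioi s ∩ Ioi (0:ℝ) = Ioi s := by
            rw [Set.Ioi_inter_Ioi, max_eq_left hs0.le]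
          rw [hss]
      _ = ∫⁻ t in Ioi s, ENNReal.ofReal (phi13 s * psi13 t) := by
          apply setLIntegral_congr_fun measurableSet_Ioi
          intro t ht
          have hst : s < t := ht
          rw [hg]
          simp only
          rw [sq_eq13 hs0 (lt_trans hs0 hst), min_eq_left hst.le, max_eq_right hst.le]
      _ ≤ ENNReal.ofReal (min 4 (s^2)⁻¹ / 2) := tail13 hs0
  have bound₁ : ∫⁻ s in Ioi (0:ℝ), ∫⁻ t in Ioi (0:ℝ), F₁ (s, t)
      ≤ ∫⁻ t in Ioi (0:ℝ), ENNReal.ofReal (min 4 (t^2)⁻¹ / 2) := by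
    rw [lintegral_lintegral_swap (f := fun s t => F₁ (s, t)) (by exact hF₁meas.aemeasurable)]
    apply setLIntegral_mono (by fun_prop)
    intro t ht
    have ht0 : (0:ℝ) < t := ht
    have hrw : (fun s => F₁ (s, t)) = (Ici t).indicator (fun s => g (s, t)) := by
      ext s; simp [hF₁, Set.indicator_apply, Set.mem_Ici]
    calc ∫⁻ s in Ioi (0:ℝ), F₁ (s, t)
        = ∫⁻ s in Ici t ∩ Ioi 0, g (s, t) := by
          rw [hrw, lintegral_indicator measurableSet_Ici,
            Measure.restrict_restrict measurableSet_Ici]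
      _ = ∫⁻ s in Ioi t, g (s, t) := by
          have hss : Ici t ∩ Ioi (0:ℝ) = Ici t :=
            Set.inter_eq_left.2 fun s hsm => lt_of_lt_of_le ht0 hsm
          rw [hss, setLIntegral_congr (Ioi_ae_eq_Ici (a := t))]
      _ = ∫⁻ s in Ioi t, ENNReal.ofReal (phi13 t * psi13 s) := by
          apply setLIntegral_congr_fun measurableSet_Ioi
          intro s hsm
          have hts : t < s := hsm
          rw [hg]
          simp only
          rw [sq_eq13 (lt_trans ht0 hts) ht0, min_eq_right hts.le, max_eq_left hts.le]
      _ ≤ ENNReal.ofReal (min 4 (t^2)⁻¹ / 2) := tail13 ht0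
  exact lt_of_le_of_lt (add_le_add bound₁ bound₂) (ENNReal.add_lt_top.2 ⟨fin13, fin13⟩)
end

section
/- Let f: (0,∞) → ℂ satisfy |f(s)| ≤ c e^{s} for some constant c > 0, and define (Rf)(s) = ∫₀^s γ₀(t) f(t) w₀(t) dt + γ₀(s) ∫_s^∞ f(t) w₀(t) dt, where γ₀(s) = (1/2)(e^{2s}−1) and w₀(s) = 2s^{-1}e^{-2s}. Then e^{-s}(Rf)(s) → 0 as s → ∞. -/
set_option maxHeartbeats 1000000

open MeasureTheory Real Set Filter

theorem stmt_18
    (f : ℝ → ℂ) (hfm : Measurable f) (c : ℝ) (hc : 0 < c)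
    (hf : ∀ s : ℝ, 0 < s → ‖f s‖ ≤ c * Real.exp s)
    (γ₀ w₀ : ℝ → ℝ)
    (hγ : γ₀ = fun s => (1 / 2) * (Real.exp (2 * s) - 1))
    (hw : w₀ = fun s => 2 * s⁻¹ * Real.exp (-2 * s))
    (Rf : ℝ → ℂ)
    (hR : Rf = fun s => (∫ t in Ioc (0:ℝ) s, (γ₀ t * w₀ t : ℝ) * f t)
        + (γ₀ s : ℂ) * ∫ t in Ioi s, (w₀ t : ℝ) * f t) :
    Tendsto (fun s : ℝ => (Real.exp (-s) : ℂ) * Rf s) atTop (nhds 0) := by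
  -- basic pointwise facts
  have hpw : ∀ t : ℝ, 0 < t → γ₀ t * w₀ t = t⁻¹ * (1 - Real.exp (-2 * t)) := by
    intro t ht
    have hmul : Real.exp (2 * t) * Real.exp (-2 * t) = 1 := by
      rw [← Real.exp_add]; norm_num
    have h2 : γ₀ t * w₀ t
        = t⁻¹ * (Real.exp (2 * t) * Real.exp (-2 * t) - Real.exp (-2 * t)) := by
      rw [hγ, hw]; ring
    rw [h2, hmul]
  have hexp_le_one : ∀ t : ℝ, 0 < t → Real.exp (-2 * t) ≤ 1 := by
    intro t ht; rw [Real.exp_le_one_iff]; nlinarith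
  have hpw_nonneg : ∀ t : ℝ, 0 < t → 0 ≤ γ₀ t * w₀ t := by
    intro t ht
    rw [hpw t ht]
    exact mul_nonneg (inv_nonneg.2 ht.le) (by linarith [hexp_le_one t ht])
  have hpw_le_two : ∀ t : ℝ, 0 < t → γ₀ t * w₀ t ≤ 2 := by
    intro t ht
    rw [hpw t ht]
    rw [inv_mul_le_iff₀ ht]
    nlinarith [Real.add_one_le_exp (-2 * t)]
  have hpw_le_inv : ∀ t : ℝ, 0 < t → γ₀ t * w₀ t ≤ t⁻¹ := by
    intro t ht
    rw [hpw t ht]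
    have := Real.exp_pos (-2 * t)
    nlinarith [inv_nonneg.2 ht.le]
  -- measurability
  have hγm : Measurable γ₀ := by rw [hγ]; fun_prop
  have hwm : Measurable w₀ := by rw [hw]; fun_prop
  -- squeeze
  have hg : Tendsto (fun s : ℝ => 2 * c * Real.exp (-(s / 2)) + 3 * (c / s))
      atTop (nhds 0) := by
    have h1 : Tendsto (fun s : ℝ => Real.exp (-(s / 2))) atTop (nhds 0) := by
      apply Real.tendsto_exp_atBot.comp
      exact tendsto_neg_atTop_atBot.comp (tendsto_id.atTop_div_const (by norm_num))
    have h2 : Tendsto (fun s : ℝ => (s : ℝ)⁻¹) atTop (nhds 0) := tendsto_inv_atTop_zero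
    have := (h1.const_mul (2 * c)).add (h2.const_mul (3 * c))
    simp only [mul_zero, add_zero] at this
    convert this using 2 with s
    ring
  apply squeeze_zero_norm' _ hg
  filter_upwards [eventually_ge_atTop (2 : ℝ)] with s hs
  have hs0 : (0:ℝ) < s := by linarith
  have hsh : (0:ℝ) < s / 2 := by linarith
  -- notation
  set A : ℂ := ∫ t in Ioc (0:ℝ) s, (γ₀ t * w₀ t : ℝ) * f t with hA_def
  set B : ℂ := ∫ t in Ioi s, (w₀ t : ℝ) * f t with hB_def
  -- norm of the first integrand
  set G : ℝ → ℝ := fun t => ‖((γ₀ t * w₀ t : ℝ) : ℂ) * f t‖ with hG_def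
  have hGval : ∀ t : ℝ, G t = |γ₀ t * w₀ t| * ‖f t‖ := by
    intro t
    simp [hG_def, abs_mul]
  -- integrability of the first integrand on Ioc 0 s
  have hFmeas : Measurable (fun t => ((γ₀ t * w₀ t : ℝ) : ℂ) * f t) := by
    apply Measurable.mul _ hfm
    exact Complex.measurable_ofReal.comp ((hγm.mul hwm))
  have hFint : IntegrableOn (fun t => ((γ₀ t * w₀ t : ℝ) : ℂ) * f t) (Ioc 0 s) := by
    apply Integrable.mono' (g := fun _ => 2 * (c * Real.exp s))
    · exact integrableOn_const measure_Ioc_lt_top.ne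
    · exact hFmeas.aestronglyMeasurable.restrict
    · rw [ae_restrict_iff' measurableSet_Ioc]
      filter_upwards with t ht
      have ht0 : 0 < t := ht.1
      have : ‖((γ₀ t * w₀ t : ℝ) : ℂ) * f t‖ = |γ₀ t * w₀ t| * ‖f t‖ := hGval t
      rw [this, abs_of_nonneg (hpw_nonneg t ht0)]
      have h1 : ‖f t‖ ≤ c * Real.exp s := by
        calc ‖f t‖ ≤ c * Real.exp t := hf t ht0
          _ ≤ c * Real.exp s := by
            have := Real.exp_le_exp.2 ht.2
            nlinarith
      nlinarith [hpw_le_two t ht0, hpw_nonneg t ht0, norm_nonneg (f t),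
        mul_le_mul (hpw_le_two t ht0) h1 (norm_nonneg (f t)) (by norm_num : (0:ℝ) ≤ 2)]
  have hGint : IntegrableOn G (Ioc 0 s) := hFint.norm
  have hGint1 : IntervalIntegrable G volume 0 (s / 2) := by
    rw [intervalIntegrable_iff_integrableOn_Ioc_of_le hsh.le]
    exact hGint.mono_set (Ioc_subset_Ioc_right (by linarith))
  have hGint2 : IntervalIntegrable G volume (s / 2) s := by
    rw [intervalIntegrable_iff_integrableOn_Ioc_of_le (by linarith)]
    exact hGint.mono_set (Ioc_subset_Ioc_left hsh.le)
  -- bound on ‖A‖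
  have hAnorm : ‖A‖ ≤ 2 * c * Real.exp (s / 2) + 2 * c / s * Real.exp s := by
    have h0 : ‖A‖ ≤ ∫ t in Ioc (0:ℝ) s, G t := by
      rw [hA_def]
      exact norm_integral_le_integral_norm _
    have hsplit : (∫ t in Ioc (0:ℝ) s, G t)
        = (∫ t in (0:ℝ)..(s/2), G t) + ∫ t in (s/2)..s, G t := by
      rw [← intervalIntegral.integral_of_le hs0.le]
      rw [← intervalIntegral.integral_add_adjacent_intervals hGint1 hGint2]
    have hb1 : (∫ t in (0:ℝ)..(s/2), G t) ≤ ∫ t in (0:ℝ)..(s/2), 2 * c * Real.exp t := by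
      apply intervalIntegral.integral_mono_on hsh.le hGint1
      · exact (Continuous.intervalIntegrable (by continuity) _ _)
      · intro x hx
        rcases eq_or_lt_of_le hx.1 with h | h
        · have : γ₀ x * w₀ x = 0 := by
            rw [hγ, hw, ← h]; norm_num
          rw [hGval, this]
          simp
          positivity
        · rw [hGval, abs_of_nonneg (hpw_nonneg x h)]
          calc γ₀ x * w₀ x * ‖f x‖ ≤ 2 * (c * Real.exp x) :=
              mul_le_mul (hpw_le_two x h) (hf x h) (norm_nonneg _) (by norm_num)
            _ = 2 * c * Real.exp x := by ring
    have hb2 : (∫ t in (s/2)..s, G t) ≤ ∫ t in (s/2)..s, 2 * c / s * Real.exp t := by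
      apply intervalIntegral.integral_mono_on (by linarith) hGint2
      · exact (Continuous.intervalIntegrable (by continuity) _ _)
      · intro x hx
        have hx0 : 0 < x := lt_of_lt_of_le hsh hx.1
        rw [hGval, abs_of_nonneg (hpw_nonneg x hx0)]
        have hinv : x⁻¹ ≤ 2 / s := by
          calc x⁻¹ ≤ (s / 2)⁻¹ := inv_anti₀ hsh hx.1
            _ = 2 / s := by rw [inv_div]
        calc γ₀ x * w₀ x * ‖f x‖ ≤ x⁻¹ * (c * Real.exp x) :=
            mul_le_mul (hpw_le_inv x hx0) (hf x hx0) (norm_nonneg _) (by positivity)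
          _ ≤ 2 / s * (c * Real.exp x) :=
            mul_le_mul_of_nonneg_right hinv (by positivity)
          _ = 2 * c / s * Real.exp x := by ring
    have he1 : (∫ t in (0:ℝ)..(s/2), 2 * c * Real.exp t)
        = 2 * c * (Real.exp (s / 2) - Real.exp 0) := by
      rw [intervalIntegral.integral_const_mul, integral_exp]
    have he2 : (∫ t in (s/2)..s, 2 * c / s * Real.exp t)
        = 2 * c / s * (Real.exp s - Real.exp (s / 2)) := by
      rw [intervalIntegral.integral_const_mul, integral_exp]
    have hcs : 0 < 2 * c / s := by positivity
    have hexp1 : (0:ℝ) < Real.exp 0 := Real.exp_pos 0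
    have hexp2 : (0:ℝ) < Real.exp (s / 2) := Real.exp_pos _
    calc ‖A‖ ≤ ∫ t in Ioc (0:ℝ) s, G t := h0
      _ = (∫ t in (0:ℝ)..(s/2), G t) + ∫ t in (s/2)..s, G t := hsplit
      _ ≤ 2 * c * (Real.exp (s / 2) - Real.exp 0)
          + 2 * c / s * (Real.exp s - Real.exp (s / 2)) := by
          rw [← he1, ← he2]; exact add_le_add hb1 hb2
      _ ≤ 2 * c * Real.exp (s / 2) + 2 * c / s * Real.exp s := by nlinarith
  -- bound on ‖B‖
  have hBnorm : ‖B‖ ≤ 2 * c / s * Real.exp (-s) := by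
    have key : ‖B‖ ≤ ∫ t in Ioi s, 2 * c / s * Real.exp (-t) := by
      rw [hB_def]
      apply norm_integral_le_of_norm_le
      · have h := (exp_neg_integrableOn_Ioi s (zero_lt_one)).const_mul (2 * c / s)
        simpa using h
      · rw [ae_restrict_iff' measurableSet_Ioi]
        filter_upwards with t ht
        have ht0 : 0 < t := lt_trans hs0 ht
        have hnorm : ‖((w₀ t : ℝ) : ℂ) * f t‖ = |w₀ t| * ‖f t‖ := by
          simp
        rw [hnorm, hw]
        have hwabs : |2 * t⁻¹ * Real.exp (-2 * t)| = 2 * t⁻¹ * Real.exp (-2 * t) := by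
          apply abs_of_nonneg; positivity
        simp only [hwabs]
        have hee : Real.exp (-2 * t) * Real.exp t = Real.exp (-t) := by
          rw [← Real.exp_add]; ring_nf
        have hstep : 2 * t⁻¹ * Real.exp (-2 * t) * ‖f t‖
            ≤ 2 * t⁻¹ * Real.exp (-2 * t) * (c * Real.exp t) := by
          apply mul_le_mul_of_nonneg_left (hf t ht0); positivity
        have hinv : t⁻¹ ≤ s⁻¹ := by
          apply inv_anti₀ hs0 ht.le
        calc 2 * t⁻¹ * Real.exp (-2 * t) * ‖f t‖
            ≤ 2 * t⁻¹ * Real.exp (-2 * t) * (c * Real.exp t) := hstep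
          _ = 2 * c * t⁻¹ * (Real.exp (-2 * t) * Real.exp t) := by ring
          _ = 2 * c * t⁻¹ * Real.exp (-t) := by rw [hee]
          _ ≤ 2 * c / s * Real.exp (-t) := by
            have := Real.exp_pos (-t)
            have h2c : (0:ℝ) ≤ 2 * c := by linarith
            have : 2 * c * t⁻¹ ≤ 2 * c / s := by
              rw [div_eq_mul_inv]
              nlinarith [Real.exp_pos (-t)]
            nlinarith [Real.exp_pos (-t)]
    have heval : (∫ t in Ioi s, 2 * c / s * Real.exp (-t)) = 2 * c / s * Real.exp (-s) := by
      rw [MeasureTheory.integral_const_mul, integral_exp_neg_Ioi]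
    linarith [key, heval.le, heval.ge]
  -- bound on γ₀ s
  have hγs : |γ₀ s| ≤ 1 / 2 * Real.exp (2 * s) := by
    rw [hγ]
    have h1 : (1:ℝ) ≤ Real.exp (2 * s) := by
      rw [Real.one_le_exp_iff]; linarith
    rw [abs_of_nonneg (by nlinarith)]
    nlinarith
  -- assembling
  have hRfbound : ‖Rf s‖ ≤ ‖A‖ + |γ₀ s| * ‖B‖ := by
    rw [hR]
    simp only
    calc ‖A + (γ₀ s : ℂ) * B‖ ≤ ‖A‖ + ‖(γ₀ s : ℂ) * B‖ := norm_add_le _ _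
      _ = ‖A‖ + |γ₀ s| * ‖B‖ := by
        rw [norm_mul, Complex.norm_real]; rfl
  have hnormeq : ‖(Real.exp (-s) : ℂ) * Rf s‖ = Real.exp (-s) * ‖Rf s‖ := by
    rw [norm_mul, Complex.norm_real, Real.norm_eq_abs, abs_of_pos (Real.exp_pos _)]
  rw [hnormeq]
  have hmid : Real.exp (-s) * ‖Rf s‖
      ≤ Real.exp (-s) * ((2 * c * Real.exp (s / 2) + 2 * c / s * Real.exp s)
        + 1 / 2 * Real.exp (2 * s) * (2 * c / s * Real.exp (-s))) := by
    apply mul_le_mul_of_nonneg_left _ (Real.exp_pos _).le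
    calc ‖Rf s‖ ≤ ‖A‖ + |γ₀ s| * ‖B‖ := hRfbound
      _ ≤ (2 * c * Real.exp (s / 2) + 2 * c / s * Real.exp s)
          + 1 / 2 * Real.exp (2 * s) * (2 * c / s * Real.exp (-s)) := by
        apply add_le_add hAnorm
        apply mul_le_mul hγs hBnorm (norm_nonneg _) (by positivity)
  refine le_trans hmid (le_of_eq ?_)
  -- algebraic identity
  have hu : Real.exp s = Real.exp (s / 2) * Real.exp (s / 2) := by
    rw [← Real.exp_add]; ring_nf
  have h2s : Real.exp (2 * s) = Real.exp s * Real.exp s := by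
    rw [← Real.exp_add]; ring_nf
  have hns : Real.exp (-s) = (Real.exp s)⁻¹ := Real.exp_neg s
  have hnh : Real.exp (-(s / 2)) = (Real.exp (s / 2))⁻¹ := Real.exp_neg (s / 2)
  rw [hns, hnh, h2s, hu]
  have hne : Real.exp (s / 2) ≠ 0 := (Real.exp_pos _).ne'
  have hsne : s ≠ 0 := hs0.ne'
  field_simp
  ring
end

section
/- Let f: (0,∞) → ℂ be integrable with respect to w₀(s) ds where w₀(s) = 2s^{-1}e^{-2s}, and define u(s) = ∫₀^s γ₀(t)f(t)w₀(t)dt + γ₀(s)∫_s^∞ f(t)w₀(t)dt with γ₀(s) = (1/2)(e^{2s}−1). Then u(s) → 0 as s → 0⁺ and u'(s) = e^{2s}∫_s^∞ f(t)w₀(t)dt remains bounded as s → 0⁺. -/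
open MeasureTheory Real Set Filter

theorem stmt_19
    (f : ℝ → ℂ)
    (γ₀ w₀ : ℝ → ℝ)
    (hγ : γ₀ = fun s => (1 / 2) * (Real.exp (2 * s) - 1))
    (hw : w₀ = fun s => 2 * s⁻¹ * Real.exp (-2 * s))
    (hfint : IntegrableOn (fun t => (w₀ t : ℝ) * f t) (Ioi (0:ℝ)))
    (u : ℝ → ℂ)
    (hu : u = fun s => (∫ t in Ioc (0:ℝ) s, (γ₀ t * w₀ t : ℝ) * f t)
        + (γ₀ s : ℂ) * ∫ t in Ioi s, (w₀ t : ℝ) * f t) :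
    Tendsto u (nhdsWithin 0 (Ioi (0:ℝ))) (nhds 0) ∧
    ∃ C : ℝ, ∀ s ∈ Ioo (0:ℝ) 1,
      ‖(Real.exp (2 * s) : ℂ) * ∫ t in Ioi s, (w₀ t : ℝ) * f t‖ ≤ C := by
  set g : ℝ → ℂ := fun t => (w₀ t : ℝ) * f t with hgdef
  set M : ℝ := ∫ t in Ioi (0:ℝ), ‖g t‖ with hM
  have hnormint : IntegrableOn (fun t => ‖g t‖) (Ioi (0:ℝ)) := hfint.norm
  have hbound : ∀ s : ℝ, 0 < s → ‖∫ t in Ioi s, g t‖ ≤ M := by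
    intro s hs
    calc ‖∫ t in Ioi s, g t‖ ≤ ∫ t in Ioi s, ‖g t‖ := norm_integral_le_integral_norm _
      _ ≤ M := setIntegral_mono_set hnormint
          (Eventually.of_forall fun t => norm_nonneg _)
          (HasSubset.Subset.eventuallyLE (Ioi_subset_Ioi hs.le))
  have hγcont : Continuous γ₀ := by rw [hγ]; continuity
  have hγ0 : γ₀ 0 = 0 := by simp [hγ]
  have hγnonneg : ∀ s : ℝ, 0 ≤ s → 0 ≤ γ₀ s := by
    intro s hs
    rw [hγ]
    have : (1:ℝ) ≤ Real.exp (2 * s) := by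
      rw [← Real.exp_zero]; exact Real.exp_le_exp.mpr (by linarith)
    simp only; nlinarith
  have hγle : ∀ t ∈ Ioc (0:ℝ) 1, |γ₀ t| ≤ Real.exp 2 := by
    intro t ht
    rw [abs_of_nonneg (hγnonneg t ht.1.le), hγ]
    have h1 : Real.exp (2 * t) ≤ Real.exp 2 := Real.exp_le_exp.mpr (by linarith [ht.2])
    have h2 : (0:ℝ) < Real.exp 2 := Real.exp_pos _
    simp only; nlinarith
  have hGeq : (fun t => ((γ₀ t * w₀ t : ℝ) : ℂ) * f t) = fun t => (γ₀ t : ℂ) * g t := by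
    funext t; simp only [hgdef]; push_cast; ring
  have hgmeas : AEStronglyMeasurable g (volume.restrict (Ioc (0:ℝ) 1)) :=
    hfint.aestronglyMeasurable.mono_measure (Measure.restrict_mono Ioc_subset_Ioi_self le_rfl)
  have hGint : IntegrableOn (fun t => ((γ₀ t * w₀ t : ℝ) : ℂ) * f t) (Icc (0:ℝ) 1) := by
    rw [integrableOn_Icc_iff_integrableOn_Ioc, hGeq]
    refine Integrable.mono' ((hnormint.mono_set Ioc_subset_Ioi_self).const_mul (Real.exp 2))
      ((Complex.continuous_ofReal.comp hγcont).aestronglyMeasurable.mul hgmeas) ?_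
    filter_upwards [ae_restrict_mem measurableSet_Ioc] with t ht
    rw [norm_mul, Complex.norm_real]
    exact mul_le_mul_of_nonneg_right (hγle t ht) (norm_nonneg _)
  constructor
  · rw [hu]
    have h1 : Tendsto (fun s => ∫ t in Ioc (0:ℝ) s, ((γ₀ t * w₀ t : ℝ) : ℂ) * f t)
        (nhdsWithin 0 (Ioi (0:ℝ))) (nhds 0) := by
      have hc := intervalIntegral.continuousOn_primitive (a := (0:ℝ)) (b := 1) hGint
      have h0 : (∫ t in Ioc (0:ℝ) (0:ℝ), ((γ₀ t * w₀ t : ℝ) : ℂ) * f t) = 0 := by simp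
      have := (hc 0 (by simp)).tendsto
      rw [h0] at this
      have hle : nhdsWithin (0:ℝ) (Ioi 0) ≤ nhdsWithin 0 (Icc (0:ℝ) 1) := by
        rw [← nhdsWithin_Ioc_eq_nhdsGT (zero_lt_one (α := ℝ))]
        exact nhdsWithin_mono _ Ioc_subset_Icc_self
      exact this.mono_left hle
    have h2 : Tendsto (fun s => (γ₀ s : ℂ) * ∫ t in Ioi s, g t)
        (nhdsWithin 0 (Ioi (0:ℝ))) (nhds 0) := by
      refine squeeze_zero_norm' (a := fun s => γ₀ s * M) ?_ ?_
      · filter_upwards [self_mem_nhdsWithin] with s hs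
        rw [norm_mul, Complex.norm_real, Real.norm_eq_abs, abs_of_nonneg (hγnonneg s (le_of_lt hs))]
        exact mul_le_mul_of_nonneg_left (hbound s hs) (hγnonneg s (le_of_lt hs))
      · have : Tendsto (fun s => γ₀ s * M) (nhds (0:ℝ)) (nhds (γ₀ 0 * M)) :=
          (hγcont.tendsto 0).mul_const M
        rw [hγ0, zero_mul] at this
        exact this.mono_left nhdsWithin_le_nhds
    simpa using h1.add h2
  · refine ⟨Real.exp 2 * M, fun s hs => ?_⟩
    rw [norm_mul, Complex.norm_real, Real.norm_eq_abs, abs_of_nonneg (Real.exp_pos _).le]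
    have h1 : Real.exp (2 * s) ≤ Real.exp 2 := Real.exp_le_exp.mpr (by linarith [hs.2])
    have h2 := hbound s hs.1
    have hMnn : (0:ℝ) ≤ M := le_trans (norm_nonneg _) h2
    calc Real.exp (2 * s) * ‖∫ t in Ioi s, g t‖
        ≤ Real.exp 2 * M := by
          apply mul_le_mul h1 h2 (norm_nonneg _) (Real.exp_pos _).le
end
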